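/- Let (S_1,m_1), ..., (S_n,m_n) be multisets in the field F with 0 ∈ S_i and m_i(0) = 1 for every i, and let H_1, ..., H_k be affine hyperplanes in F^n (each H_j given as the zero set of a polynomial ℓ_j of total degree 1). Suppose that every point s ∈ S \ {0} lies on at least m_1(s_1) + ⋯ + m_n(s_n) − n + 1 of the hyperplanes, and that the point 0 lies on none of them (ℓ_j(0) ≠ 0 for all j). Then k ≥ d(S_1) + d(S_2) + ⋯ + d(S_n) − n. -/

import Mathlib

open MvPolynomial

/-- The Taylor coefficient `f_u(s)`: the coefficient of `x^u` in `f(x + s)`. -/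
noncomputable def taylorCoeff {F : Type*} [Field F] {n : ℕ}
    (f : MvPolynomial (Fin n) F) (s : Fin n → F) (u : Fin n →₀ ℕ) : F :=
  coeff u (aeval (fun i => X i + C (s i)) f)

/-- Membership in the ideal `I(s, w)`: all Taylor coefficients `f_u(s)` with
`u < w` (componentwise) vanish. -/
def memPointIdeal {F : Type*} [Field F] {n : ℕ}
    (f : MvPolynomial (Fin n) F) (s : Fin n → F) (w : Fin n → ℕ) : Prop :=
  ∀ u : Fin n →₀ ℕ, (∀ i, u i < w i) → taylorCoeff f s u = 0

/-- The polynomial `g_i(x_i) = ∏_{s ∈ S_i} (x_i - s)^{m_i(s)}`. -/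
noncomputable def gPoly {F : Type*} [Field F] {n : ℕ}
    (S : Fin n → Finset F) (m : Fin n → F → ℕ) (i : Fin n) : MvPolynomial (Fin n) F :=
  ∏ s ∈ S i, (X i - C s) ^ m i s

/-- The size `d_i = Σ_{s ∈ S_i} m_i(s)` of the multiset `(S_i, m_i)`. -/
def dSize {F : Type*} {n : ℕ} (S : Fin n → Finset F) (m : Fin n → F → ℕ) (i : Fin n) : ℕ :=
  ∑ s ∈ S i, m i s

namespace AF

section
variable {F : Type*} [Field F] {n : ℕ}

variable {F : Type*} [Field F] {n : ℕ}

lemma constantCoeff_shift (s : Fin n → F) (f : MvPolynomial (Fin n) F) :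
    constantCoeff (aeval (fun i => X i + C (s i)) f) = eval s f := by
  have h : (constantCoeff.comp ((aeval (fun i => X i + C (s i)) : MvPolynomial (Fin n) F →ₐ[F] MvPolynomial (Fin n) F) : MvPolynomial (Fin n) F →+* MvPolynomial (Fin n) F)) = (eval s : MvPolynomial (Fin n) F →+* F) := by
    apply ringHom_ext <;> intro r <;> simp
  exact RingHom.congr_fun h f

lemma taylorCoeff_zero_eq_eval (f : MvPolynomial (Fin n) F) (s : Fin n → F) :
    taylorCoeff f s 0 = eval s f := by
  rw [taylorCoeff, ← constantCoeff_shift s f]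
  rfl

lemma taylorCoeff_mul (f g : MvPolynomial (Fin n) F) (s : Fin n → F) (u : Fin n →₀ ℕ) :
    taylorCoeff (f * g) s u =
      ∑ x ∈ Finset.HasAntidiagonal.antidiagonal u, taylorCoeff f s x.1 * taylorCoeff g s x.2 := by
  simp [taylorCoeff, map_mul, coeff_mul]

lemma memPointIdeal_mul_left (f g : MvPolynomial (Fin n) F) (s : Fin n → F) (w : Fin n → ℕ)
    (hg : memPointIdeal g s w) : memPointIdeal (f * g) s w := by
  intro u hu
  rw [taylorCoeff_mul]
  refine Finset.sum_eq_zero fun x hx => ?_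
  rw [Finset.HasAntidiagonal.mem_antidiagonal] at hx
  rw [hg x.2 (fun i => lt_of_le_of_lt ?_ (hu i)), mul_zero]
  have : x.1 i + x.2 i = u i := by rw [← hx]; rfl
  omega

lemma memPointIdeal_sub (f g : MvPolynomial (Fin n) F) (s : Fin n → F) (w : Fin n → ℕ)
    (hf : memPointIdeal f s w) (hg : memPointIdeal g s w) : memPointIdeal (f - g) s w := by
  intro u hu
  have : taylorCoeff (f - g) s u = taylorCoeff f s u - taylorCoeff g s u := by
    simp [taylorCoeff, map_sub, coeff_sub]
  rw [this, hf u hu, hg u hu, sub_zero]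

lemma memPointIdeal_add (f g : MvPolynomial (Fin n) F) (s : Fin n → F) (w : Fin n → ℕ)
    (hf : memPointIdeal f s w) (hg : memPointIdeal g s w) : memPointIdeal (f + g) s w := by
  intro u hu
  have : taylorCoeff (f + g) s u = taylorCoeff f s u + taylorCoeff g s u := by
    simp [taylorCoeff, map_add, coeff_add]
  rw [this, hf u hu, hg u hu, add_zero]

/-- `I(s,w)` as an honest ideal. -/
noncomputable def pointIdeal (s : Fin n → F) (w : Fin n → ℕ) : Ideal (MvPolynomial (Fin n) F) where
  carrier := {f | memPointIdeal f s w}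
  zero_mem' := by intro u hu; simp [taylorCoeff]
  add_mem' := fun hf hg => memPointIdeal_add _ _ _ _ hf hg
  smul_mem' := fun c f hf => memPointIdeal_mul_left c f _ _ hf

lemma mem_pointIdeal_iff (f : MvPolynomial (Fin n) F) (s : Fin n → F) (w : Fin n → ℕ) :
    f ∈ pointIdeal s w ↔ memPointIdeal f s w := Iff.rfl

/-- `(X i - C (s i)) ^ e ∈ I(s, w)` when `w i ≤ e`. -/
lemma linear_pow_mem (s : Fin n → F) (w : Fin n → ℕ) (i : Fin n) (e : ℕ) (he : w i ≤ e) :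
    memPointIdeal ((X i - C (s i)) ^ e) s w := by
  intro u hu
  have h1 : (aeval (fun i => X i + C (s i)) ((X i - C (s i)) ^ e) : MvPolynomial (Fin n) F)
      = X i ^ e := by
    simp
  classical
  rw [taylorCoeff, h1, coeff_X_pow]
  rw [if_neg]
  intro h
  have := hu i
  rw [← h] at this
  simp at this
  omega

end

section
variable {F : Type*} [Field F] {n : ℕ}

variable {F : Type*} [Field F] {n : ℕ}

/-- a product over a set containing `s i` of linear-power factors lies in `I(s,w)`
provided `w i ≤ m i (s i)`. -/
lemma prod_linear_pow_mem [DecidableEq F] (s : Fin n → F) (w : Fin n → ℕ) (i : Fin n)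
    (T : Finset F) (e : F → ℕ) (hmem : s i ∈ T) (hw : w i ≤ e (s i)) :
    memPointIdeal (∏ t ∈ T, (X i - C t) ^ e t) s w := by
  rw [← Finset.mul_prod_erase T _ hmem]
  rw [mul_comm]
  exact memPointIdeal_mul_left _ _ _ _ (linear_pow_mem s w i (e (s i)) hw)

lemma gPoly_mem [DecidableEq F] (S : Fin n → Finset F) (m : Fin n → F → ℕ) (i : Fin n)
    (s : Fin n → F) (hs : s i ∈ S i) :
    memPointIdeal (gPoly S m i) s (fun j => m j (s j)) :=
  prod_linear_pow_mem s _ i (S i) (m i) hs le_rfl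

/-- coefficients of a product of polynomials with zero constant coefficient vanish
below the number of factors. -/
lemma coeff_prod_constantCoeff_zero {J : Type*} (T : Finset J)
    (f : J → MvPolynomial (Fin n) F) (hf : ∀ j ∈ T, constantCoeff (f j) = 0)
    (v : Fin n →₀ ℕ) (hv : (v.sum fun _ e => e) < T.card) :
    coeff v (∏ j ∈ T, f j) = 0 := by
  classical
  induction T using Finset.induction generalizing v with
  | empty => simp at hv
  | @insert a Tc hj ih =>
    rw [Finset.prod_insert hj, coeff_mul]
    refine Finset.sum_eq_zero fun x hx => ?_
    rw [Finset.HasAntidiagonal.mem_antidiagonal] at hx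
    by_cases h1 : x.1 = 0
    · have : coeff x.1 (f a) = 0 := by
        rw [h1]; rw [← constantCoeff_eq]; exact hf a (Finset.mem_insert_self a Tc)
      rw [this, zero_mul]
    · rw [ih (fun j hjT => hf j (Finset.mem_insert_of_mem hjT)) x.2 ?_, mul_zero]
      rw [Finset.card_insert_of_notMem hj] at hv
      have hsum : (x.1.sum fun _ e => e) + (x.2.sum fun _ e => e) = v.sum fun _ e => e := by
        rw [← hx, Finsupp.sum_add_index] <;> simp
      have h1' : 0 < x.1.sum fun _ e => e := by
        rcases Finsupp.ne_iff.mp h1 with ⟨i, hi⟩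
        simp only [Finsupp.coe_zero, Pi.zero_apply] at hi
        have hle : x.1 i ≤ x.1.sum fun _ e => e := by
          apply Finset.single_le_sum (f := fun j => x.1 j) (fun _ _ => Nat.zero_le _)
          exact Finsupp.mem_support_iff.mpr hi
        omega
      omega

end

section
variable {F : Type*} [Field F] {n : ℕ}

variable {F : Type*} [Field F] {n : ℕ}

lemma totalDegree_aeval_X_le (i : Fin n) (p : Polynomial F) :
    (Polynomial.aeval (X i : MvPolynomial (Fin n) F) p).totalDegree ≤ p.natDegree := by
  rw [Polynomial.aeval_def, Polynomial.eval₂_eq_sum_range]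
  refine le_trans (totalDegree_finset_sum _ _) ?_
  apply Finset.sup_le
  intro c hc
  rw [Finset.mem_range] at hc
  refine le_trans (totalDegree_mul _ _) ?_
  have h1 : (algebraMap F (MvPolynomial (Fin n) F)) (p.coeff c) = C (p.coeff c) := rfl
  rw [h1, totalDegree_C]
  have := totalDegree_pow (X i : MvPolynomial (Fin n) F) c
  simp only [totalDegree_X] at this
  omega

lemma monic_remainder_totalDegree (i : Fin n) (q : Polynomial F) (hq : q.Monic) (d : ℕ)
    (hd : q.natDegree = d) :
    (Polynomial.aeval (X i : MvPolynomial (Fin n) F) q - X i ^ d).totalDegree ≤ d - 1 := by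
  rcases Nat.eq_zero_or_pos d with h0 | hpos
  · subst h0
    have : q = 1 := hq.natDegree_eq_zero.mp hd
    simp [this]
  · have hnd : (q - Polynomial.X ^ d).natDegree ≤ d - 1 := by
      rw [Polynomial.natDegree_le_iff_coeff_eq_zero]
      intro N hN
      rcases Nat.lt_or_ge N d with h | h
      · omega
      · rcases Nat.eq_or_lt_of_le h with h | h
        · subst h
          rw [Polynomial.coeff_sub, Polynomial.coeff_X_pow, if_pos rfl, ← hd, hq.coeff_natDegree]
          ring
        · rw [Polynomial.coeff_sub, Polynomial.coeff_X_pow, if_neg (by omega),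
            Polynomial.coeff_eq_zero_of_natDegree_lt (by omega), sub_zero]
    have heq : Polynomial.aeval (X i : MvPolynomial (Fin n) F) q - X i ^ d
        = Polynomial.aeval (X i : MvPolynomial (Fin n) F) (q - Polynomial.X ^ d) := by
      simp
    rw [heq]
    exact le_trans (totalDegree_aeval_X_le i _) hnd

lemma monic_remainder_zero (i : Fin n) (q : Polynomial F) (hq : q.Monic)
    (hd : q.natDegree = 0) :
    Polynomial.aeval (X i : MvPolynomial (Fin n) F) q - X i ^ (0:ℕ) = 0 := by
  have : q = 1 := hq.natDegree_eq_zero.mp hd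
  simp [this]

lemma prod_X_pow_eq_monomial'' (e : Fin n → ℕ) (A : Finset (Fin n)) :
    (∏ i ∈ A, (X i ^ e i : MvPolynomial (Fin n) F)) = monomial (∑ i ∈ A, Finsupp.single i (e i)) 1 := by
  classical
  induction A using Finset.induction with
  | empty => simp
  | @insert a A ha ih =>
    rw [Finset.prod_insert ha, Finset.sum_insert ha, ih, X_pow_eq_monomial, monomial_mul, one_mul]

lemma prod_X_pow_eq_monomial' (e : Fin n → ℕ) :
    (∏ i, (X i ^ e i : MvPolynomial (Fin n) F)) = monomial (∑ i, Finsupp.single i (e i)) 1 :=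
  prod_X_pow_eq_monomial'' e Finset.univ



end

section
variable {F : Type*} [Field F] {n : ℕ}

variable {F : Type*} [Field F] {n : ℕ}

lemma corner_apply (e : Fin n → ℕ) (j : Fin n) :
    (∑ i, Finsupp.single i (e i) : Fin n →₀ ℕ) j = e j := by
  classical
  rw [Finsupp.finset_sum_apply]
  simp only [Finsupp.single_apply]
  rw [Finset.sum_ite_eq' Finset.univ j e]
  simp

lemma corner_support_sum (e : Fin n → ℕ) :
    ∑ i ∈ (∑ i, Finsupp.single i (e i) : Fin n →₀ ℕ).support,
      (∑ i, Finsupp.single i (e i) : Fin n →₀ ℕ) i = ∑ i, e i := by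
  classical
  have h := Finsupp.sum_fintype (∑ i, Finsupp.single i (e i) : Fin n →₀ ℕ)
    (fun _ c => c) (fun _ => rfl)
  rw [Finsupp.sum] at h
  rw [h]
  exact Finset.sum_congr rfl fun j _ => corner_apply e j

lemma coeff_corner_prod (f : Fin n → MvPolynomial (Fin n) F) (e : Fin n → ℕ)
    (h0 : ∀ i, e i = 0 → f i - X i ^ e i = 0)
    (h1 : ∀ i, (f i - X i ^ e i).totalDegree ≤ e i - 1) :
    coeff (∑ i, Finsupp.single i (e i)) (∏ i, f i) = 1 := by
  classical
  set T : Fin n →₀ ℕ := ∑ i, Finsupp.single i (e i) with hT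
  set ρ : Fin n → MvPolynomial (Fin n) F := fun i => f i - X i ^ e i with hρ
  have hfi : ∀ i, f i = X i ^ e i + ρ i := fun i => by rw [hρ]; ring
  have : (∏ i, f i) = ∏ i, (X i ^ e i + ρ i) := Finset.prod_congr rfl fun i _ => hfi i
  rw [this, Finset.prod_add, coeff_sum]
  have hmain : coeff T ((∏ i ∈ Finset.univ, X i ^ e i) * ∏ i ∈ Finset.univ \ Finset.univ, ρ i)
      = 1 := by
    rw [Finset.sdiff_self, Finset.prod_empty, mul_one, prod_X_pow_eq_monomial', ← hT,
      coeff_monomial, if_pos rfl]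
  rw [Finset.sum_eq_single Finset.univ (fun t ht htne => ?_) (fun h => absurd (Finset.mem_powerset.mpr (Finset.Subset.refl _)) h)]
  · exact hmain
  · -- t ≠ univ : coefficient vanishes
    by_cases hz : ∃ i ∈ Finset.univ \ t, ρ i = 0
    · rcases hz with ⟨i, hi, hzi⟩
      rw [Finset.prod_eq_zero hi hzi, mul_zero, coeff_zero]
    · push_neg at hz
      have hne : (Finset.univ \ t).Nonempty := by
        rw [Finset.sdiff_nonempty]
        intro hsub
        exact htne (Finset.Subset.antisymm (Finset.subset_univ t) hsub)
      have he1 : ∀ i ∈ Finset.univ \ t, 1 ≤ e i := by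
        intro i hi
        by_contra hlt
        exact hz i hi (h0 i (by omega))
      apply coeff_eq_zero_of_totalDegree_lt
      rw [hT, corner_support_sum]
      refine lt_of_le_of_lt (totalDegree_mul _ _) ?_
      have hA : (∏ i ∈ t, (X i ^ e i : MvPolynomial (Fin n) F)).totalDegree ≤ ∑ i ∈ t, e i := by
        refine le_trans (totalDegree_finset_prod _ _) (Finset.sum_le_sum fun i _ => ?_)
        refine le_trans (totalDegree_pow _ _) ?_
        simp [totalDegree_X]
      have hB : (∏ i ∈ Finset.univ \ t, ρ i).totalDegree ≤ ∑ i ∈ Finset.univ \ t, (e i - 1) :=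
        le_trans (totalDegree_finset_prod _ _) (Finset.sum_le_sum fun i _ => h1 i)
      have h2 : ∑ i ∈ Finset.univ \ t, (e i - 1) < ∑ i ∈ Finset.univ \ t, e i :=
        Finset.sum_lt_sum_of_nonempty hne fun i hi => by have := he1 i hi; omega
      have h3 : (∑ i ∈ Finset.univ \ t, e i) + ∑ i ∈ t, e i = ∑ i, e i :=
        Finset.sum_sdiff (Finset.subset_univ t)
      omega


end

section
variable {F : Type*} [Field F] {n : ℕ}

variable {F : Type*} [Field F] {n : ℕ}

lemma tdeg_monomial_le (u : Fin n →₀ ℕ) (c : F) :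
    (monomial u c).totalDegree ≤ u.sum fun _ e => e := by
  by_cases hc : c = 0
  · simp [hc]
  · rw [totalDegree_monomial u hc]

/-- the reduction result predicate -/
def Red (S : Fin n → Finset F) (m : Fin n → F → ℕ) (N : ℕ) (f : MvPolynomial (Fin n) F) : Prop :=
  ∃ r : MvPolynomial (Fin n) F,
    f - r ∈ Ideal.span (Set.range (gPoly S m)) ∧ r.totalDegree ≤ N ∧
    (∀ i, ∀ u ∈ r.support, u i < dSize S m i) ∧
    (∀ t : Fin n →₀ ℕ, (∀ i, t i < dSize S m i) → N ≤ ∑ i ∈ t.support, t i →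
      coeff t r = coeff t f)

lemma red_add (S : Fin n → Finset F) (m : Fin n → F → ℕ) (N : ℕ)
    (f g : MvPolynomial (Fin n) F) (hf : Red S m N f) (hg : Red S m N g) :
    Red S m N (f + g) := by
  obtain ⟨rf, h1, h2, h3, h4⟩ := hf
  obtain ⟨rg, h1', h2', h3', h4'⟩ := hg
  refine ⟨rf + rg, ?_, ?_, ?_, ?_⟩
  · have : f + g - (rf + rg) = (f - rf) + (g - rg) := by ring
    rw [this]; exact Ideal.add_mem _ h1 h1'
  · exact le_trans (totalDegree_add rf rg) (max_le h2 h2')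
  · intro i u hu
    rcases Finset.mem_union.mp (MvPolynomial.support_add hu) with h | h
    · exact h3 i u h
    · exact h3' i u h
  · intro t ht1 ht2
    rw [coeff_add, coeff_add, h4 t ht1 ht2, h4' t ht1 ht2]

lemma red_zero (S : Fin n → Finset F) (m : Fin n → F → ℕ) (N : ℕ) : Red S m N 0 :=
  ⟨0, by simp [Ideal.zero_mem], by simp, by simp, by simp⟩

lemma sum_single_eq (u : Fin n →₀ ℕ) (i : Fin n) (d : ℕ) (h : d ≤ u i) :
    (u - Finsupp.single i d) + Finsupp.single i d = u := by
  ext j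
  simp only [Finsupp.add_apply, Finsupp.tsub_apply, Finsupp.single_apply]
  by_cases hij : i = j
  · subst hij; simp; omega
  · simp [hij]

lemma red_monomial (S : Fin n → Finset F) (m : Fin n → F → ℕ)
    (hd : ∀ i, 1 ≤ dSize S m i)
    (hrem : ∀ i, ((X i : MvPolynomial (Fin n) F) ^ (dSize S m i) - gPoly S m i).totalDegree
      ≤ dSize S m i - 1) :
    ∀ N, (∀ M, M < N → ∀ f : MvPolynomial (Fin n) F, f.totalDegree ≤ M → Red S m M f) →
    ∀ (u : Fin n →₀ ℕ) (c : F), (u.sum fun _ e => e) ≤ N → Red S m N (monomial u c) := by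
  intro N IH u c hu
  classical
  by_cases hred : ∀ i, u i < dSize S m i
  · refine ⟨monomial u c, by simp [Ideal.zero_mem], le_trans (tdeg_monomial_le u c) hu, ?_, fun _ _ _ => rfl⟩
    intro i v hv
    rw [MvPolynomial.support_monomial] at hv
    by_cases hc : c = 0
    · simp [hc] at hv
    · simp [hc] at hv; subst hv; exact hred i
  · push_neg at hred
    obtain ⟨i, hi⟩ := hred
    set d := dSize S m i with hdd
    have hui : u i ≤ u.sum fun _ e => e := by
      rcases Nat.eq_zero_or_pos (u i) with h | h
      · omega
      · exact Finset.single_le_sum (f := fun j => u j) (fun _ _ => Nat.zero_le _)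
          (Finsupp.mem_support_iff.mpr (by omega))
    have hN1 : 1 ≤ N := le_trans (le_trans (hd i) (le_trans hi hui)) hu
    set u' := u - Finsupp.single i d with hu'
    have hkey : u' + Finsupp.single i d = u := sum_single_eq u i d hi
    have hsum' : (u'.sum fun _ e => e) + d = u.sum fun _ e => e := by
      rw [← hkey, Finsupp.sum_add_index (by simp) (by simp)]
      simp [Finsupp.sum_single_index]
    set f₂ := monomial u' c * (X i ^ d - gPoly S m i) with hf₂
    have hsplit : monomial u c = monomial u' c * gPoly S m i + f₂ := by
      rw [hf₂]
      have : monomial u' c * gPoly S m i + monomial u' c * (X i ^ d - gPoly S m i)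
          = monomial u' c * X i ^ d := by ring
      rw [this, X_pow_eq_monomial, monomial_mul, hkey, mul_one]
    have hdeg₂ : f₂.totalDegree ≤ N - 1 := by
      refine le_trans (totalDegree_mul _ _) ?_
      have e1 := tdeg_monomial_le u' c
      have e2 := hrem i
      have e3 := hd i
      rw [← hdd] at e2 e3
      omega
    obtain ⟨r₂, h1, h2, h3, h4⟩ := IH (N - 1) (by omega) f₂ hdeg₂
    refine ⟨r₂, ?_, by omega, h3, ?_⟩
    · have : monomial u c - r₂ = monomial u' c * gPoly S m i + (f₂ - r₂) := by
        rw [hsplit]; ring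
      rw [this]
      exact Ideal.add_mem _
        (Ideal.mul_mem_left _ _ (Ideal.subset_span ⟨i, rfl⟩)) h1
    · intro t ht1 ht2
      have hcoefff₂ : coeff t f₂ = 0 :=
        coeff_eq_zero_of_totalDegree_lt (by omega)
      rw [h4 t ht1 (by omega), hcoefff₂, coeff_monomial, if_neg ?_]
      intro h
      subst h
      have := ht1 i
      omega

lemma reduce (S : Fin n → Finset F) (m : Fin n → F → ℕ)
    (hd : ∀ i, 1 ≤ dSize S m i)
    (hrem : ∀ i, ((X i : MvPolynomial (Fin n) F) ^ (dSize S m i) - gPoly S m i).totalDegree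
      ≤ dSize S m i - 1) :
    ∀ N (f : MvPolynomial (Fin n) F), f.totalDegree ≤ N → Red S m N f := by
  intro N
  induction N using Nat.strong_induction_on with
  | _ N IH =>
    intro f hf
    have hmono := red_monomial S m hd hrem N IH
    have claim : ∀ A : Finset (Fin n →₀ ℕ), (∀ u ∈ A, (u.sum fun _ e => e) ≤ N) →
        ∀ φ : (Fin n →₀ ℕ) → F, Red S m N (∑ u ∈ A, monomial u (φ u)) := by
      intro A
      induction A using Finset.induction with
      | empty => intro _ φ; simpa using red_zero S m N
      | @insert a A ha ih =>
        intro hA φ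
        rw [Finset.sum_insert ha]
        exact red_add S m N _ _ (hmono a (φ a) (hA a (Finset.mem_insert_self a A)))
          (ih (fun u hu => hA u (Finset.mem_insert_of_mem hu)) φ)
    have := claim f.support (fun u hu => le_trans (MvPolynomial.le_totalDegree hu) hf)
      (fun u => coeff u f)
    rwa [← as_sum f] at this


end

section
variable {F : Type*} [Field F] {n : ℕ}

variable {F : Type*} [Field F] {n : ℕ}

/-- `degreeOf` of a finite sum is bounded. -/
lemma degreeOf_sum_le' {ι : Type*} (j : Fin n) (A : Finset ι)
    (f : ι → MvPolynomial (Fin n) F) (k : ℕ) (h : ∀ x ∈ A, degreeOf j (f x) ≤ k) :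
    degreeOf j (∑ x ∈ A, f x) ≤ k := by
  classical
  induction A using Finset.induction with
  | empty => simp
  | @insert a A ha ih =>
    rw [Finset.sum_insert ha]
    refine le_trans (degreeOf_add_le _ _ _) (max_le (h a (Finset.mem_insert_self a A))
      (ih fun x hx => h x (Finset.mem_insert_of_mem hx)))

lemma degreeOf_prod_le' {ι : Type*} (j : Fin n) (A : Finset ι)
    (f : ι → MvPolynomial (Fin n) F) (k : ι → ℕ) (h : ∀ x ∈ A, degreeOf j (f x) ≤ k x) :
    degreeOf j (∏ x ∈ A, f x) ≤ ∑ x ∈ A, k x := by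
  classical
  induction A using Finset.induction with
  | empty =>
    simp only [Finset.prod_empty, Finset.sum_empty, Nat.le_zero]
    rw [show (1 : MvPolynomial (Fin n) F) = C 1 from (map_one (C : F →+* MvPolynomial (Fin n) F)).symm, degreeOf_C]
  | @insert a A ha ih =>
    rw [Finset.prod_insert ha, Finset.sum_insert ha]
    refine le_trans (degreeOf_mul_le _ _ _) ?_
    exact Nat.add_le_add (h a (Finset.mem_insert_self a A))
      (ih fun x hx => h x (Finset.mem_insert_of_mem hx))

lemma degreeOf_one' (j : Fin n) : degreeOf j (1 : MvPolynomial (Fin n) F) = 0 := by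
  rw [show (1 : MvPolynomial (Fin n) F) = C 1 from (map_one (C : F →+* MvPolynomial (Fin n) F)).symm,
    degreeOf_C]

lemma degreeOf_pow_le' (j : Fin n) (p : MvPolynomial (Fin n) F) (e : ℕ) (k : ℕ)
    (h : degreeOf j p ≤ k) : degreeOf j (p ^ e) ≤ e * k := by
  have := degreeOf_prod_le' j (Finset.range e) (fun _ => p) (fun _ => k) (fun _ _ => h)
  simpa [Finset.prod_const, Finset.sum_const, mul_comm] using this

/-- shifting only variable `0` does not increase the degree in the other variables -/
lemma degreeOf_shift0_le (a : F) (j : Fin (n+1)) (hj : j ≠ 0)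
    (r : MvPolynomial (Fin (n+1)) F) :
    degreeOf j (aeval (fun l => if l = 0 then X 0 + C a else X l) r) ≤ degreeOf j r := by
  classical
  conv_lhs => rw [as_sum r]
  rw [map_sum]
  apply degreeOf_sum_le' j _ _ _ ?_
  intro u hu
  rw [aeval_monomial]
  refine le_trans (degreeOf_mul_le _ _ _) ?_
  have h1 : degreeOf j ((algebraMap F (MvPolynomial (Fin (n+1)) F)) (coeff u r)) = 0 := by
    have : (algebraMap F (MvPolynomial (Fin (n+1)) F)) (coeff u r) = C (coeff u r) := rfl
    rw [this, degreeOf_C]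
  rw [h1, zero_add]
  have hfac : ∀ l : Fin (n+1),
      degreeOf j (if l = 0 then X 0 + C a else X l : MvPolynomial (Fin (n+1)) F)
        ≤ (if l = j then 1 else 0) := by
    intro l
    by_cases hl0 : l = 0
    · subst hl0
      rw [if_pos rfl, if_neg (fun h => hj h.symm)]
      refine le_trans (degreeOf_add_le _ _ _) ?_
      rw [degreeOf_X, degreeOf_C, if_neg hj]
      simp
    · rw [if_neg hl0, degreeOf_X]
      by_cases hlj : l = j
      · subst hlj; simp
      · rw [if_neg (fun h => hlj h.symm), if_neg hlj]
  have h2 : degreeOf j (Finsupp.prod u fun l e =>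
      (if l = 0 then X 0 + C a else X l : MvPolynomial (Fin (n+1)) F) ^ e) ≤ u j := by
    rw [Finsupp.prod]
    refine le_trans (degreeOf_prod_le' j u.support _
      (fun l => u l * (if l = j then 1 else 0)) (fun l _ => degreeOf_pow_le' j _ _ _ (hfac l))) ?_
    have : ∀ l ∈ u.support, u l * (if l = j then 1 else 0) = if l = j then u j else 0 := by
      intro l _; by_cases hlj : l = j
      · subst hlj; simp
      · simp [hlj]
    rw [Finset.sum_congr rfl this, Finset.sum_ite_eq' u.support j (fun _ => u j)]
    split <;> simp
  exact le_trans h2 (MvPolynomial.monomial_le_degreeOf j hu)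



end

variable {F : Type*} [Field F] {n : ℕ}

/-- The key commutation: `finSuccEquiv` intertwines the full shift with
a coefficient-wise shift followed by a Taylor shift. -/
lemma finSuccEquiv_shift (a : F) (s' : Fin n → F) (r : MvPolynomial (Fin (n+1)) F) :
    (MvPolynomial.finSuccEquiv F n) (aeval (fun j => X j + C (Fin.cons a s' j)) r)
      = Polynomial.map ((aeval (fun i => X i + C (s' i))).toRingHom :
            MvPolynomial (Fin n) F →+* MvPolynomial (Fin n) F)
          (((MvPolynomial.finSuccEquiv F n) r).comp
            (Polynomial.X + Polynomial.C (C a))) := by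
  have key : (((MvPolynomial.finSuccEquiv F n) : MvPolynomial (Fin (n+1)) F →+* Polynomial (MvPolynomial (Fin n) F)).comp
        ((aeval (fun j => X j + C (Fin.cons a s' j))).toRingHom))
      = ((Polynomial.mapRingHom ((aeval (fun i => X i + C (s' i))).toRingHom :
            MvPolynomial (Fin n) F →+* MvPolynomial (Fin n) F)).comp
          ((Polynomial.eval₂RingHom (Polynomial.C : MvPolynomial (Fin n) F →+* Polynomial (MvPolynomial (Fin n) F))
            (Polynomial.X + Polynomial.C (C a))).comp
            ((MvPolynomial.finSuccEquiv F n) : MvPolynomial (Fin (n+1)) F →+* Polynomial (MvPolynomial (Fin n) F)))) := by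
    apply ringHom_ext
    · intro b
      simp [MvPolynomial.finSuccEquiv_apply, Polynomial.eval₂_C]
    · intro i
      refine Fin.cases ?_ ?_ i
      · simp [MvPolynomial.finSuccEquiv_apply, Polynomial.eval₂_X]
      · intro j
        simp [MvPolynomial.finSuccEquiv_apply, Polynomial.eval₂_C, Fin.cons_succ]
  have := RingHom.congr_fun key r
  simpa [Polynomial.comp, Polynomial.eval₂_map] using this

lemma taylorCoeff_cons (r : MvPolynomial (Fin (n+1)) F) (a : F) (s' : Fin n → F)
    (c : ℕ) (u' : Fin n →₀ ℕ) :
    taylorCoeff r (Fin.cons a s') (Finsupp.cons c u')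
      = taylorCoeff ((Polynomial.taylor (C a) ((MvPolynomial.finSuccEquiv F n) r)).coeff c)
          s' u' := by
  rw [taylorCoeff, ← MvPolynomial.finSuccEquiv_coeff_coeff, finSuccEquiv_shift,
    Polynomial.coeff_map, Polynomial.taylor_apply]
  rfl



lemma vanish {F : Type*} [Field F] : ∀ (n : ℕ) (S : Fin n → Finset F) (m : Fin n → F → ℕ)
    (r : MvPolynomial (Fin n) F),
    (∀ i, degreeOf i r < dSize S m i) →
    (∀ s : Fin n → F, (∀ i, s i ∈ S i) → memPointIdeal r s (fun i => m i (s i))) →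
    r = 0 := by
  intro n
  induction n with
  | zero =>
    intro S m r hdeg hvan
    obtain ⟨b, rfl⟩ : ∃ b, r = C b := ⟨constantCoeff r, (MvPolynomial.eq_C_of_isEmpty r)⟩
    have h := hvan (fun i => i.elim0) (fun i => i.elim0) 0 (fun i => i.elim0)
    rw [taylorCoeff] at h
    simp at h
    rw [h, map_zero]
  | succ n IH =>
    intro S m r hdeg hvan
    classical
    set q := (MvPolynomial.finSuccEquiv F n) r with hq
    have key : ∀ a ∈ S 0, ∀ c < m 0 a, (Polynomial.taylor (C a : MvPolynomial (Fin n) F) q).coeff c = 0 := by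
      intro a ha c hc
      -- identify with a shift₀ of r for the degree bound
      have hs0 : (Polynomial.taylor (C a : MvPolynomial (Fin n) F) q)
          = (MvPolynomial.finSuccEquiv F n)
              (aeval (fun l => if l = 0 then X 0 + C a else X l) r) := by
        have hfun : (fun j => X j + C ((Fin.cons a (fun _ => (0:F))) j))
            = (fun l : Fin (n+1) => if l = 0 then X 0 + C a
                else (X l : MvPolynomial (Fin (n+1)) F)) := by
          funext l
          refine Fin.cases ?_ ?_ l
          · simp
          · intro j; simp [Fin.succ_ne_zero]
        rw [← hfun, finSuccEquiv_shift a (fun _ => 0) r]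
        have hid : ((aeval (fun i => (X i + C (0:F) : MvPolynomial (Fin n) F))).toRingHom)
            = RingHom.id (MvPolynomial (Fin n) F) := by
          apply ringHom_ext <;> intro <;> simp
        rw [hid, Polynomial.map_id, Polynomial.taylor_apply]
      apply IH (fun j => S j.succ) (fun j => m j.succ)
      · intro j
        calc degreeOf j ((Polynomial.taylor (C a : MvPolynomial (Fin n) F) q).coeff c)
            ≤ degreeOf j.succ (aeval (fun l => if l = 0 then X 0 + C a else X l) r) := by
              rw [hs0]
              exact MvPolynomial.degreeOf_coeff_finSuccEquiv _ j c
          _ ≤ degreeOf j.succ r := degreeOf_shift0_le a j.succ (Fin.succ_ne_zero j) r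
          _ < dSize S m j.succ := hdeg j.succ
      · intro s' hs' u' hu'
        rw [← taylorCoeff_cons]
        apply hvan (Fin.cons a s') ?_ (Finsupp.cons c u') ?_
        · intro i
          refine Fin.cases ?_ ?_ i
          · simpa using ha
          · intro j; simpa using hs' j
        · intro i
          refine Fin.cases ?_ ?_ i
          · simpa using hc
          · intro j
            simpa [Finsupp.cons_succ] using hu' j
    -- each (X - C (C a)) ^ (m 0 a) divides q
    have hdvd : ∀ a ∈ S 0,
        (Polynomial.X - Polynomial.C (C a : MvPolynomial (Fin n) F)) ^ (m 0 a) ∣ q := by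
      intro a ha
      have hX : Polynomial.X ^ (m 0 a) ∣ Polynomial.taylor (C a : MvPolynomial (Fin n) F) q :=
        Polynomial.X_pow_dvd_iff.mpr (fun d hd => key a ha d hd)
      obtain ⟨h, hh⟩ := hX
      have : q = Polynomial.taylor (-(C a : MvPolynomial (Fin n) F)) (Polynomial.taylor (C a) q) := by
        rw [Polynomial.taylor_taylor]
        simp
      rw [this, hh, Polynomial.taylor_apply, Polynomial.mul_comp, Polynomial.pow_comp,
        Polynomial.X_comp]
      have hXC : Polynomial.X + Polynomial.C (-(C a : MvPolynomial (Fin n) F))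
          = Polynomial.X - Polynomial.C (C a) := by rw [map_neg]; ring
      rw [hXC]
      exact dvd_mul_right _ _
    -- conclude q = 0
    by_contra hr
    have hq0 : q ≠ 0 := by
      intro h0
      apply hr
      apply (MvPolynomial.finSuccEquiv F n).injective
      rw [map_zero, ← hq, h0]
    have hprod : (∏ a ∈ S 0, (Polynomial.X - Polynomial.C (C a : MvPolynomial (Fin n) F)) ^ (m 0 a)) ∣ q := by
      apply Finset.prod_dvd_of_coprime
      · intro a ha b hb hab
        apply IsCoprime.pow
        apply Polynomial.isCoprime_X_sub_C_of_isUnit_sub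
        rw [← map_sub]
        exact (isUnit_iff_ne_zero.mpr (sub_ne_zero.mpr hab)).map C
      · exact fun a ha => hdvd a ha
    have hdegq : q.natDegree < dSize S m 0 := by
      rw [hq, MvPolynomial.natDegree_finSuccEquiv]
      exact hdeg 0
    have hndp : (∏ a ∈ S 0, (Polynomial.X - Polynomial.C (C a : MvPolynomial (Fin n) F)) ^ (m 0 a)).natDegree
        = dSize S m 0 := by
      rw [Polynomial.natDegree_prod]
      · refine Finset.sum_congr rfl fun a _ => ?_
        rw [Polynomial.natDegree_pow, Polynomial.natDegree_X_sub_C, mul_one]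
      · intro a _
        exact pow_ne_zero _ (Polynomial.X_sub_C_ne_zero _)
    have := Polynomial.natDegree_le_of_dvd hprod hq0
    omega


end AF

/-- Covering discrete boxes with multiplicity (Alon–Füredi for multisets): if `0 ∈ S_i`
with `m_i(0) = 1` for every `i`, the hyperplanes `H_j = {ℓ_j = 0}` (with `deg ℓ_j = 1`)
cover every point `s ∈ S \ {0}` at least `m_1(s_1) + ⋯ + m_n(s_n) - n + 1` times, and
none of them passes through `0`, then `k ≥ d(S_1) + ⋯ + d(S_n) - n`. -/
theorem stmt_15 {F : Type*} [Field F] [DecidableEq F] {n : ℕ} (hn : 1 ≤ n)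
    (S : Fin n → Finset F) (hS : ∀ i, (S i).Nonempty)
    (m : Fin n → F → ℕ) (hm : ∀ i, ∀ s ∈ S i, 1 ≤ m i s)
    (h0S : ∀ i, (0 : F) ∈ S i) (hm0 : ∀ i, m i 0 = 1)
    (k : ℕ) (ℓ : Fin k → MvPolynomial (Fin n) F)
    (hdeg : ∀ j, (ℓ j).totalDegree = 1)
    (hcover : ∀ s : Fin n → F, (∀ i, s i ∈ S i) → s ≠ 0 →
      (∑ i, m i (s i)) - n + 1 ≤
        (Finset.univ.filter fun j => eval s (ℓ j) = 0).card)
    (h0 : ∀ j, eval (0 : Fin n → F) (ℓ j) ≠ 0) :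
    (∑ i, dSize S m i) - n ≤ k := by
  classical
  by_contra hcon
  push_neg at hcon
  have hd1 : ∀ i, 1 ≤ dSize S m i := by
    intro i
    have h := Finset.single_le_sum (f := fun s => m i s) (fun s _ => Nat.zero_le _) (h0S i)
    have h' : m i 0 ≤ dSize S m i := h
    rw [hm0 i] at h'
    exact h'
  set e : Fin n → ℕ := fun i => dSize S m i - 1 with he_def
  set D : ℕ := ∑ i, e i with hD_def
  have hDsum : D + n = ∑ i, dSize S m i := by
    have h1 : ∀ i ∈ Finset.univ, e i + 1 = dSize S m i := fun i _ => by
      have := hd1 i; simp only [he_def]; omega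
    calc D + n = ∑ i : Fin n, (e i + 1) := by
          rw [Finset.sum_add_distrib]; simp [hD_def]
      _ = ∑ i, dSize S m i := Finset.sum_congr rfl h1
  have hkD : k < D := by omega
  -- univariate transplants
  have transplant : ∀ (i : Fin n) (T : Finset F),
      Polynomial.aeval (X i : MvPolynomial (Fin n) F)
        (∏ t ∈ T, (Polynomial.X - Polynomial.C t) ^ m i t)
      = ∏ t ∈ T, (X i - C t) ^ m i t := by
    intro i T
    rw [map_prod]
    refine Finset.prod_congr rfl fun t _ => ?_
    rw [map_pow, map_sub, Polynomial.aeval_X, Polynomial.aeval_C, MvPolynomial.algebraMap_eq]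
  have hGmonic : ∀ (i : Fin n) (T : Finset F),
      (∏ t ∈ T, (Polynomial.X - Polynomial.C t) ^ m i t).Monic :=
    fun i T => Polynomial.monic_prod_of_monic _ _ fun t _ => (Polynomial.monic_X_sub_C t).pow _
  have hGdeg : ∀ (i : Fin n) (T : Finset F),
      (∏ t ∈ T, (Polynomial.X - Polynomial.C t) ^ m i t).natDegree = ∑ t ∈ T, m i t := by
    intro i T
    rw [Polynomial.natDegree_prod _ _ (fun t _ => pow_ne_zero _ (Polynomial.X_sub_C_ne_zero t))]
    exact Finset.sum_congr rfl fun t _ => by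
      rw [Polynomial.natDegree_pow, Polynomial.natDegree_X_sub_C, mul_one]
  have hrem : ∀ i, ((X i : MvPolynomial (Fin n) F) ^ (dSize S m i) - gPoly S m i).totalDegree
      ≤ dSize S m i - 1 := by
    intro i
    have h1 : gPoly S m i = Polynomial.aeval (X i : MvPolynomial (Fin n) F)
        (∏ t ∈ S i, (Polynomial.X - Polynomial.C t) ^ m i t) := (transplant i (S i)).symm
    have h2 := AF.monic_remainder_totalDegree i _ (hGmonic i (S i)) (dSize S m i)
      (hGdeg i (S i))
    have h3 : ((X i : MvPolynomial (Fin n) F) ^ (dSize S m i) - gPoly S m i)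
        = -(Polynomial.aeval (X i : MvPolynomial (Fin n) F)
            (∏ t ∈ S i, (Polynomial.X - Polynomial.C t) ^ m i t) - X i ^ (dSize S m i)) := by
      rw [h1]; ring
    rw [h3, totalDegree_neg]
    exact h2
  -- the lambda polynomial
  set lam : Fin n → MvPolynomial (Fin n) F :=
    fun i => ∏ t ∈ (S i).erase 0, (X i - C t) ^ m i t with hlam_def
  set lamT : MvPolynomial (Fin n) F := ∏ i, lam i with hlamT_def
  have herase_sum : ∀ i, ∑ t ∈ (S i).erase 0, m i t = e i := by
    intro i
    have h := Finset.add_sum_erase (S i) (m i) (h0S i)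
    rw [hm0 i] at h
    have h2 := hd1 i
    simp only [he_def]
    have : dSize S m i = ∑ t ∈ S i, m i t := rfl
    omega
  have hlam_eq : ∀ i, lam i = Polynomial.aeval (X i : MvPolynomial (Fin n) F)
      (∏ t ∈ (S i).erase 0, (Polynomial.X - Polynomial.C t) ^ m i t) :=
    fun i => (transplant i _).symm
  have hlamdeg_nat : ∀ i, (∏ t ∈ (S i).erase 0, (Polynomial.X - Polynomial.C t) ^ m i t).natDegree
      = e i := fun i => by rw [hGdeg]; exact herase_sum i
  have hlam_h1 : ∀ i, (lam i - X i ^ e i).totalDegree ≤ e i - 1 := by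
    intro i
    rw [hlam_eq i]
    exact AF.monic_remainder_totalDegree i _ (hGmonic i _) (e i) (hlamdeg_nat i)
  have hlam_h0 : ∀ i, e i = 0 → lam i - X i ^ e i = 0 := by
    intro i hei
    rw [hlam_eq i, hei]
    exact AF.monic_remainder_zero i _ (hGmonic i _) (by rw [hlamdeg_nat i, hei])
  set T : Fin n →₀ ℕ := ∑ i, Finsupp.single i (e i) with hT_def
  have hTred : ∀ i, T i < dSize S m i := by
    intro i
    rw [hT_def, AF.corner_apply]
    have := hd1 i
    simp only [he_def]
    omega
  have hTsupp : ∑ i ∈ T.support, T i = D := by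
    rw [hT_def]
    exact AF.corner_support_sum e
  have hcorner : coeff T lamT = 1 := AF.coeff_corner_prod lam e hlam_h0 hlam_h1
  have hlamdeg : lamT.totalDegree ≤ D := by
    rw [hlamT_def, hD_def]
    refine le_trans (totalDegree_finset_prod _ _) (Finset.sum_le_sum fun i _ => ?_)
    rw [hlam_eq i]
    exact le_trans (AF.totalDegree_aeval_X_le i _) (le_of_eq (hlamdeg_nat i))
  have hlammem : ∀ s : Fin n → F, (∀ i, s i ∈ S i) → s ≠ 0 →
      memPointIdeal lamT s (fun i => m i (s i)) := by
    intro s hs hs0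
    obtain ⟨i, hi⟩ := Function.ne_iff.mp hs0
    rw [hlamT_def, ← Finset.mul_prod_erase Finset.univ lam (Finset.mem_univ i), mul_comm]
    apply AF.memPointIdeal_mul_left
    exact AF.prod_linear_pow_mem s _ i ((S i).erase 0) (m i)
      (Finset.mem_erase.mpr ⟨by simpa using hi, hs i⟩) le_rfl
  have hlam0 : eval (0 : Fin n → F) lamT ≠ 0 := by
    rw [hlamT_def, map_prod, Finset.prod_ne_zero_iff]
    intro i _
    rw [hlam_def]
    simp only [map_prod]
    rw [Finset.prod_ne_zero_iff]
    intro t ht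
    rw [map_pow, map_sub, eval_X, eval_C]
    have ht0 : t ≠ 0 := (Finset.mem_erase.mp ht).1
    apply pow_ne_zero
    simpa [sub_eq_zero] using ht0
  -- the product of the hyperplane forms
  set P : MvPolynomial (Fin n) F := ∏ j, ℓ j with hP_def
  have hPdeg : P.totalDegree ≤ k := by
    refine le_trans (totalDegree_finset_prod _ _) ?_
    calc ∑ j, (ℓ j).totalDegree = ∑ _j : Fin k, 1 := Finset.sum_congr rfl fun j _ => hdeg j
      _ = k := by simp
      _ ≤ k := le_rfl
  have hP0 : eval (0 : Fin n → F) P ≠ 0 := by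
    rw [hP_def, map_prod, Finset.prod_ne_zero_iff]
    exact fun j _ => h0 j
  have hPmem : ∀ s, (∀ i, s i ∈ S i) → s ≠ 0 → memPointIdeal P s (fun i => m i (s i)) := by
    intro s hs hsne
    have hTfilter := hcover s hs hsne
    have hmemT : memPointIdeal (∏ j ∈ Finset.univ.filter fun j => eval s (ℓ j) = 0, ℓ j) s
        (fun i => m i (s i)) := by
      intro u hu
      rw [taylorCoeff, map_prod]
      apply AF.coeff_prod_constantCoeff_zero
      · intro j hj
        rw [AF.constantCoeff_shift]
        exact (Finset.mem_filter.mp hj).2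
      · have h1 : (u.sum fun _ x => x) = ∑ i, u i := Finsupp.sum_fintype u _ (fun _ => rfl)
        have h2 : ∑ i, (u i + 1) ≤ ∑ i, m i (s i) :=
          Finset.sum_le_sum fun i _ => Nat.succ_le_of_lt (hu i)
        have h3 : ∑ i, (u i + 1) = (∑ i, u i) + n := by
          rw [Finset.sum_add_distrib]; simp
        have h4 : n ≤ ∑ i, m i (s i) := by
          calc n = ∑ _i : Fin n, 1 := by simp
            _ ≤ _ := Finset.sum_le_sum fun i _ => hm i (s i) (hs i)
        omega
    rw [hP_def, ← Finset.prod_filter_mul_prod_filter_not Finset.univ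
      (fun j => eval s (ℓ j) = 0) ℓ, mul_comm]
    exact AF.memPointIdeal_mul_left _ _ _ _ hmemT
  -- the combined polynomial Q
  set Q : MvPolynomial (Fin n) F :=
    C (eval (0 : Fin n → F) P) * lamT - C (eval (0 : Fin n → F) lamT) * P with hQ_def
  have hQmem : ∀ s, (∀ i, s i ∈ S i) → memPointIdeal Q s (fun i => m i (s i)) := by
    intro s hs
    by_cases hs0 : s = 0
    · subst hs0
      intro u hu
      have hu0 : u = 0 := by
        ext i
        have h := hu i
        simp only [Pi.zero_apply, hm0 i] at h
        simpa using Nat.lt_one_iff.mp h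
      rw [hu0, AF.taylorCoeff_zero_eq_eval, hQ_def]
      rw [map_sub, map_mul, map_mul, eval_C, eval_C]
      ring
    · exact AF.memPointIdeal_sub _ _ _ _
        (AF.memPointIdeal_mul_left _ _ _ _ (hlammem s hs hs0))
        (AF.memPointIdeal_mul_left _ _ _ _ (hPmem s hs hs0))
  have hQdeg : Q.totalDegree ≤ D := by
    rw [hQ_def, sub_eq_add_neg]
    refine le_trans (totalDegree_add _ _) (max_le ?_ ?_)
    · refine le_trans (totalDegree_mul _ _) ?_
      rw [totalDegree_C]
      simpa using hlamdeg
    · rw [totalDegree_neg]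
      refine le_trans (totalDegree_mul _ _) ?_
      rw [totalDegree_C]
      omega
  have hQT : coeff T Q = eval (0 : Fin n → F) P := by
    rw [hQ_def, coeff_sub, coeff_C_mul, coeff_C_mul, hcorner, mul_one]
    have hPT : coeff T P = 0 := coeff_eq_zero_of_totalDegree_lt (by rw [hTsupp]; omega)
    rw [hPT, mul_zero, sub_zero]
  -- reduce Q modulo the g's
  obtain ⟨r, hspan, hrdeg, hrred, hrcoeff⟩ := AF.reduce S m hd1 hrem D Q hQdeg
  have hrmem : ∀ s : Fin n → F, (∀ i, s i ∈ S i) →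
      memPointIdeal r s (fun i => m i (s i)) := by
    intro s hs
    have hsub : Q - r ∈ AF.pointIdeal s (fun i => m i (s i)) := by
      refine Ideal.span_le.mpr ?_ hspan
      rintro _ ⟨i, rfl⟩
      exact AF.gPoly_mem S m i s (hs i)
    have hrewrite : r = Q - (Q - r) := by ring
    rw [hrewrite]
    exact AF.memPointIdeal_sub _ _ _ _ (hQmem s hs) hsub
  have hr0 : r = 0 := by
    apply AF.vanish n S m r ?_ hrmem
    intro i
    rw [degreeOf_lt_iff (hd1 i)]
    exact fun u hu => hrred i u hu
  have hfinal : coeff T r = eval (0 : Fin n → F) P := by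
    rw [hrcoeff T hTred (by rw [hTsupp]), hQT]
  rw [hr0, coeff_zero] at hfinal
  exact hP0 hfinal.symm
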